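/- Let E be a real vector space and let T₁, T₂ : E → E be admissible linear maps, i.e. range(id_E − T₁) and range(id_E − T₂) are finite-dimensional. Then the composition T₂ ∘ T₁ is admissible (range(id_E − T₂T₁) is finite-dimensional), and det(T₂ ∘ T₁) = det(T₂) · det(T₁); explicitly, for any finite-dimensional subspaces W, W₁, W₂ of E containing range(id_E − T₂T₁), range(id_E − T₁), range(id_E − T₂) respectively, the determinant of (T₂T₁)|_W equals the product of the determinants of T₂|_{W₂} and T₁|_{W₁}. -/

import Mathlib

open LinearMap

/-- Block-triangular determinant lemma: if `S` preserves `U` and acts as the identity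
modulo `U`, then `det S = det (S|_U)`. -/
lemma det_eq_det_restrict_of_sub_mem {F : Type*} [AddCommGroup F] [Module ℝ F]
    [FiniteDimensional ℝ F] (S : F →ₗ[ℝ] F) (U : Submodule ℝ F)
    (hU : ∀ x ∈ U, S x ∈ U) (hid : ∀ x : F, S x - x ∈ U) :
    LinearMap.det S = LinearMap.det (S.restrict hU) := by
  classical
  obtain ⟨C, hC⟩ := Submodule.exists_isCompl U
  let e : (U × C) ≃ₗ[ℝ] F := Submodule.prodEquivOfIsCompl U C hC
  let bU := Module.finBasis ℝ U
  let bC := Module.finBasis ℝ C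
  let b : Module.Basis _ ℝ F := (bU.prod bC).map e
  rw [← LinearMap.det_toMatrix b S, ← LinearMap.det_toMatrix bU (S.restrict hU)]
  have hb : ∀ i, e.symm (b i) = (bU.prod bC) i := fun i => by
    simp [b, Module.Basis.map_apply]
  have key : (LinearMap.toMatrix b b S) =
      Matrix.fromBlocks (LinearMap.toMatrix bU bU (S.restrict hU))
        (Matrix.of fun i j => (bU.prod bC).repr (e.symm (S (b (Sum.inr j)))) (Sum.inl i)) 0 1 := by
    ext i j
    have hrepr : ∀ x : F, b.repr x = (bU.prod bC).repr (e.symm x) := fun x => by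
      simp [b, Module.Basis.map_repr]
    rcases j with j | j
    · have hbj : b (Sum.inl j) = (bU j : F) := by
        simp [b, Module.Basis.map_apply, Module.Basis.prod_apply, e,
          Submodule.coe_prodEquivOfIsCompl']
      have hSU : S (b (Sum.inl j)) ∈ U := by rw [hbj]; exact hU _ (bU j).2
      have hsymm : e.symm (S (b (Sum.inl j))) = (⟨S (b (Sum.inl j)), hSU⟩, 0) := by
        rw [LinearEquiv.symm_apply_eq]
        simp [e, Submodule.coe_prodEquivOfIsCompl']
      rcases i with i | i
      · simp only [LinearMap.toMatrix_apply, Matrix.fromBlocks_apply₁₁, hrepr, hsymm,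
          Module.Basis.prod_repr_inl]
        congr 1
        ext
        simp [hbj, LinearMap.restrict_apply]
      · simp only [LinearMap.toMatrix_apply, Matrix.fromBlocks_apply₂₁, hrepr, hsymm,
          Module.Basis.prod_repr_inr, Matrix.zero_apply]
        simp
    · have hbj : b (Sum.inr j) = (bC j : F) := by
        simp [b, Module.Basis.map_apply, Module.Basis.prod_apply, e,
          Submodule.coe_prodEquivOfIsCompl']
      have hSC : S (b (Sum.inr j)) - b (Sum.inr j) ∈ U := hid _
      have hsymm : e.symm (S (b (Sum.inr j))) =
          (⟨S (b (Sum.inr j)) - b (Sum.inr j), hSC⟩, bC j) := by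
        rw [LinearEquiv.symm_apply_eq]
        simp [e, Submodule.coe_prodEquivOfIsCompl', ← hbj]
      rcases i with i | i
      · simp only [LinearMap.toMatrix_apply, Matrix.fromBlocks_apply₁₂, hrepr, hsymm,
          Module.Basis.prod_repr_inl, Matrix.of_apply]
      · simp only [LinearMap.toMatrix_apply, Matrix.fromBlocks_apply₂₂, hrepr, hsymm,
          Module.Basis.prod_repr_inr, Matrix.one_apply]
        simp [Finsupp.single_apply, eq_comm]
  rw [key, Matrix.det_fromBlocks_zero₂₁]
  simp

/-- The determinant of the restriction is independent of the invariant subspace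
containing `range (id - T)`, for nested subspaces. -/
lemma det_restrict_eq_of_le {E : Type*} [AddCommGroup E] [Module ℝ E]
    (T : E →ₗ[ℝ] E) (V V' : Submodule ℝ E) [FiniteDimensional ℝ V']
    (hVV' : V ≤ V') (hV : LinearMap.range (LinearMap.id - T) ≤ V)
    (hTV : ∀ x ∈ V, T x ∈ V) (hTV' : ∀ x ∈ V', T x ∈ V') :
    LinearMap.det (T.restrict hTV') = LinearMap.det (T.restrict hTV) := by
  set S := T.restrict hTV'
  set U : Submodule ℝ V' := V.comap V'.subtype
  have hU : ∀ x ∈ U, S x ∈ U := fun x hx => hTV _ hx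
  have hid : ∀ x : V', S x - x ∈ U := fun x => by
    have : T x - (x : E) ∈ V := by
      have : -(((LinearMap.id : E →ₗ[ℝ] E) - T) x) ∈ V :=
        V.neg_mem (hV ⟨x, rfl⟩)
      simpa using this
    simpa [U, S, LinearMap.restrict_apply] using this
  have h1 : LinearMap.det S = LinearMap.det (S.restrict hU) :=
    det_eq_det_restrict_of_sub_mem S U hU hid
  rw [h1]
  let e : U ≃ₗ[ℝ] V := Submodule.comapSubtypeEquivOfLe hVV'
  have h2 : T.restrict hTV = (e : U →ₗ[ℝ] V) ∘ₗ (S.restrict hU) ∘ₗ (e.symm : V →ₗ[ℝ] U) := by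
    ext x
    have hx : ((e.symm x : V') : E) = (x : E) := by
      conv_rhs => rw [← e.apply_symm_apply x]
      rfl
    simp only [LinearMap.comp_apply, LinearMap.restrict_apply]
    erw [Submodule.comapSubtypeEquivOfLe_apply_coe]
    simp [S, LinearMap.restrict_apply, hx]
  rw [h2, LinearMap.det_conj]

lemma invariant_of_range_le {E : Type*} [AddCommGroup E] [Module ℝ E]
    (T : E →ₗ[ℝ] E) (V : Submodule ℝ E)
    (h : LinearMap.range (LinearMap.id - T) ≤ V) : ∀ x ∈ V, T x ∈ V := by
  intro x hx
  have h1 : x - T x ∈ V := h ⟨x, rfl⟩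
  have : x - (x - T x) ∈ V := V.sub_mem hx h1
  simpa using this

/-- The composition of two admissible linear maps `T₁, T₂ : E → E` is admissible, and its
determinant is the product of the determinants: for finite-dimensional subspaces `W, W₁, W₂`
containing `range (id − T₂T₁)`, `range (id − T₁)`, `range (id − T₂)` respectively, one has
`det ((T₂T₁)|_W) = det (T₂|_{W₂}) * det (T₁|_{W₁})`. -/
theorem admissible_det_comp
    {E : Type*} [AddCommGroup E] [Module ℝ E] (T₁ T₂ : E →ₗ[ℝ] E)
    (h₁ : FiniteDimensional ℝ (LinearMap.range (LinearMap.id - T₁)))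
    (h₂ : FiniteDimensional ℝ (LinearMap.range (LinearMap.id - T₂))) :
    FiniteDimensional ℝ (LinearMap.range (LinearMap.id - T₂ ∘ₗ T₁)) ∧
    (∀ W W₁ W₂ : Submodule ℝ E,
      FiniteDimensional ℝ W → FiniteDimensional ℝ W₁ → FiniteDimensional ℝ W₂ →
      LinearMap.range (LinearMap.id - T₂ ∘ₗ T₁) ≤ W →
      LinearMap.range (LinearMap.id - T₁) ≤ W₁ →
      LinearMap.range (LinearMap.id - T₂) ≤ W₂ →
      ∀ (hW : ∀ x ∈ W, (T₂ ∘ₗ T₁) x ∈ W) (hW₁ : ∀ x ∈ W₁, T₁ x ∈ W₁)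
        (hW₂ : ∀ x ∈ W₂, T₂ x ∈ W₂),
        LinearMap.det ((T₂ ∘ₗ T₁).restrict hW) =
          LinearMap.det (T₂.restrict hW₂) * LinearMap.det (T₁.restrict hW₁)) := by
  have hmap : FiniteDimensional ℝ
      ((LinearMap.range (LinearMap.id - T₁)).map T₂) :=
    Module.Finite.map _ T₂
  have hle : LinearMap.range (LinearMap.id - T₂ ∘ₗ T₁) ≤
      LinearMap.range (LinearMap.id - T₂) ⊔ (LinearMap.range (LinearMap.id - T₁)).map T₂ := by
    rintro y ⟨x, rfl⟩
    have hx : ((LinearMap.id - T₂ ∘ₗ T₁) : E →ₗ[ℝ] E) x =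
        ((LinearMap.id - T₂) : E →ₗ[ℝ] E) x + T₂ (((LinearMap.id - T₁) : E →ₗ[ℝ] E) x) := by
      simp [sub_add_sub_cancel]
    rw [hx]
    exact Submodule.add_mem_sup ⟨x, rfl⟩ (Submodule.mem_map_of_mem ⟨x, rfl⟩)
  have hfin : FiniteDimensional ℝ (LinearMap.range (LinearMap.id - T₂ ∘ₗ T₁)) :=
    Submodule.finiteDimensional_of_le hle
  refine ⟨hfin, ?_⟩
  intro W W₁ W₂ hWf hW₁f hW₂f hrW hrW₁ hrW₂ hW hW₁ hW₂
  set V' : Submodule ℝ E := W ⊔ W₁ ⊔ W₂ with hV'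
  haveI : FiniteDimensional ℝ V' := by
    haveI := hWf; haveI := hW₁f; haveI := hW₂f
    exact Submodule.finiteDimensional_sup _ _
  have hWV' : W ≤ V' := le_trans le_sup_left le_sup_left
  have hW₁V' : W₁ ≤ V' := le_trans le_sup_right le_sup_left
  have hW₂V' : W₂ ≤ V' := le_sup_right
  have hr : LinearMap.range (LinearMap.id - T₂ ∘ₗ T₁) ≤ V' := le_trans hrW hWV'
  have hr₁ : LinearMap.range (LinearMap.id - T₁) ≤ V' := le_trans hrW₁ hW₁V'
  have hr₂ : LinearMap.range (LinearMap.id - T₂) ≤ V' := le_trans hrW₂ hW₂V'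
  have hV : ∀ x ∈ V', (T₂ ∘ₗ T₁) x ∈ V' := invariant_of_range_le _ _ hr
  have hV₁ : ∀ x ∈ V', T₁ x ∈ V' := invariant_of_range_le _ _ hr₁
  have hV₂ : ∀ x ∈ V', T₂ x ∈ V' := invariant_of_range_le _ _ hr₂
  have e0 : LinearMap.det ((T₂ ∘ₗ T₁).restrict hW) =
      LinearMap.det ((T₂ ∘ₗ T₁).restrict hV) :=
    (det_restrict_eq_of_le (T₂ ∘ₗ T₁) W V' hWV' hrW hW hV).symm
  have e1 : LinearMap.det (T₁.restrict hW₁) = LinearMap.det (T₁.restrict hV₁) :=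
    (det_restrict_eq_of_le T₁ W₁ V' hW₁V' hrW₁ hW₁ hV₁).symm
  have e2 : LinearMap.det (T₂.restrict hW₂) = LinearMap.det (T₂.restrict hV₂) :=
    (det_restrict_eq_of_le T₂ W₂ V' hW₂V' hrW₂ hW₂ hV₂).symm
  rw [e0, e1, e2]
  have hcomp : (T₂ ∘ₗ T₁).restrict hV = (T₂.restrict hV₂) ∘ₗ (T₁.restrict hV₁) :=
    LinearMap.restrict_comp hV₁ hV₂ hV
  rw [hcomp, LinearMap.det_comp]
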